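/- (Second-order smoothness of the regularized covariance objective.) Let k be a positive integer, γ ∈ (0,1), τ > 0, let G ∈ ℝ^{k×k} be any symmetric matrix, and define f(Σ) := (τ/(2(1−γ))) log det Σ − (1/(1−γ)) Tr(ΣG) for symmetric positive definite Σ ∈ ℝ^{k×k}. Fix 0 < a < 1 and set M_a := τ(−log a + a − 1)/(2(1−γ)(a−1)²). Then for all symmetric positive definite X, Y ∈ ℝ^{k×k} with aI ⪯ X ⪯ I and aI ⪯ Y ⪯ I, one has 0 ≤ f(X) − f(Y) + Tr( ((τ/(2(1−γ)))X⁻¹ − (1/(1−γ))G) · (Y − X) ) ≤ M_a · Tr( (X⁻¹Y − I)² ). Moreover M_a ≥ τ/(4(1−γ)). -/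

import Mathlib

open Matrix


noncomputable def spec {m l : ℕ} (M : Matrix (Fin m) (Fin l) ℝ) : ℝ :=
  ‖LinearMap.toContinuousLinearMap (Matrix.toEuclideanLin M)‖

noncomputable def sigMin {m l : ℕ} (M : Matrix (Fin m) (Fin l) ℝ) : ℝ :=
  sInf {r : ℝ | ∃ x : EuclideanSpace ℝ (Fin l), ‖x‖ = 1 ∧
    r = ‖LinearMap.toContinuousLinearMap (Matrix.toEuclideanLin M) x‖}

noncomputable def frob {m l : ℕ} (M : Matrix (Fin m) (Fin l) ℝ) : ℝ :=
  Real.sqrt (Matrix.trace (Mᵀ * M))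

def loewner {m : ℕ} (X Y : Matrix (Fin m) (Fin m) ℝ) : Prop :=
  (Y - X).PosSemidef

noncomputable def Pmat {n k : ℕ} (γ : ℝ) (A : Matrix (Fin n) (Fin n) ℝ)
    (B : Matrix (Fin n) (Fin k) ℝ) (Q : Matrix (Fin n) (Fin n) ℝ)
    (R : Matrix (Fin k) (Fin k) ℝ) (K : Matrix (Fin k) (Fin n) ℝ) :
    Matrix (Fin n) (Fin n) ℝ :=
  ∑' t : ℕ, γ ^ t • (((A - B * K)ᵀ) ^ t * (Q + Kᵀ * R * K) * (A - B * K) ^ t)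

noncomputable def Emat {n k : ℕ} (γ : ℝ) (A : Matrix (Fin n) (Fin n) ℝ)
    (B : Matrix (Fin n) (Fin k) ℝ) (Q : Matrix (Fin n) (Fin n) ℝ)
    (R : Matrix (Fin k) (Fin k) ℝ) (K : Matrix (Fin k) (Fin n) ℝ) :
    Matrix (Fin k) (Fin n) ℝ :=
  -(γ • (Bᵀ * Pmat γ A B Q R K * (A - B * K))) + R * K

noncomputable def Smat {n k : ℕ} (γ : ℝ) (A : Matrix (Fin n) (Fin n) ℝ)
    (B : Matrix (Fin n) (Fin k) ℝ) (W : Matrix (Fin n) (Fin n) ℝ)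
    (D₀ : Matrix (Fin n) (Fin n) ℝ) (K : Matrix (Fin k) (Fin n) ℝ)
    (Sg : Matrix (Fin k) (Fin k) ℝ) : Matrix (Fin n) (Fin n) ℝ :=
  ∑' t : ℕ, γ ^ t •
    ((A - B * K) ^ t * D₀ * ((A - B * K)ᵀ) ^ t +
      ∑ s ∈ Finset.Icc 1 t,
        (A - B * K) ^ (t - s) * (B * Sg * Bᵀ + W) * ((A - B * K)ᵀ) ^ (t - s))

noncomputable def Cost {n k : ℕ} (γ τ : ℝ) (A : Matrix (Fin n) (Fin n) ℝ)
    (B : Matrix (Fin n) (Fin k) ℝ) (Q : Matrix (Fin n) (Fin n) ℝ)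
    (R : Matrix (Fin k) (Fin k) ℝ) (W : Matrix (Fin n) (Fin n) ℝ)
    (D₀ : Matrix (Fin n) (Fin n) ℝ) (K : Matrix (Fin k) (Fin n) ℝ)
    (Sg : Matrix (Fin k) (Fin k) ℝ) : ℝ :=
  Matrix.trace (D₀ * Pmat γ A B Q R K) +
    (1 / (1 - γ)) *
      (Matrix.trace (Sg * (R + γ • (Bᵀ * Pmat γ A B Q R K * B))) -
        (τ / 2) * ((k : ℝ) + Real.log ((2 * Real.pi) ^ k * Sg.det)) +
        γ * Matrix.trace (W * Pmat γ A B Q R K))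

noncomputable def fent {n k : ℕ} (γ τ : ℝ) (A : Matrix (Fin n) (Fin n) ℝ)
    (B : Matrix (Fin n) (Fin k) ℝ) (Q : Matrix (Fin n) (Fin n) ℝ)
    (R : Matrix (Fin k) (Fin k) ℝ) (K : Matrix (Fin k) (Fin n) ℝ)
    (Sg : Matrix (Fin k) (Fin k) ℝ) : ℝ :=
  (τ / (2 * (1 - γ))) * Real.log Sg.det -
    (1 / (1 - γ)) * Matrix.trace (Sg * (R + γ • (Bᵀ * Pmat γ A B Q R K * B)))

/-- The objective `f(Σ) = (τ/(2(1−γ))) log det Σ − (1/(1−γ)) Tr(ΣG)`. -/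
noncomputable def fG (k : ℕ) (γ τ : ℝ) (G : Matrix (Fin k) (Fin k) ℝ)
    (Sg : Matrix (Fin k) (Fin k) ℝ) : ℝ :=
  (τ / (2 * (1 - γ))) * Real.log Sg.det - (1 / (1 - γ)) * Matrix.trace (Sg * G)

set_option maxHeartbeats 1000000

private lemma aux_deriv' (M : ℝ) {x : ℝ} (hx : 0 < x) :
    HasDerivAt (fun t : ℝ => M * (t - 1) ^ 2 - (t - 1) + Real.log t)
      ((x - 1) * (2 * M * x - 1) / x) x := by
  have h1 : HasDerivAt (fun t : ℝ => t - 1) 1 x := (hasDerivAt_id x).sub_const 1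
  have h2 : HasDerivAt (fun t : ℝ => (t - 1) ^ 2) (2 * (x - 1)) x := by
    simpa using h1.fun_pow 2
  have h3 := ((h2.const_mul M).sub h1).add (Real.hasDerivAt_log hx.ne')
  refine h3.congr_deriv ?_
  field_simp
  ring

private lemma aux_half' {a : ℝ} (ha0 : 0 < a) (ha1 : a < 1) :
    (1 : ℝ) / 2 ≤ (-Real.log a + a - 1) / (a - 1) ^ 2 := by
  have hne : a - 1 ≠ 0 := by linarith
  have hsq : (0:ℝ) < (a - 1) ^ 2 := by positivity
  rw [div_le_div_iff₀ (by norm_num) hsq, one_mul]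
  -- suffices : (a-1)^2 ≤ 2 * (-log a + a - 1)
  set ψ : ℝ → ℝ := fun x => -Real.log x + x - 1 - (x - 1) ^ 2 / 2 with hψ
  have hd : ∀ x : ℝ, 0 < x → HasDerivAt ψ (-((x - 1) ^ 2 / x)) x := by
    intro x hx
    have h1 : HasDerivAt (fun t : ℝ => t - 1) 1 x := (hasDerivAt_id x).sub_const 1
    have h2 : HasDerivAt (fun t : ℝ => (t - 1) ^ 2) (2 * (x - 1)) x := by
      simpa using h1.fun_pow 2
    have h3 := (((Real.hasDerivAt_log hx.ne').neg.add (hasDerivAt_id x)).sub_const 1).sub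
      (h2.div_const 2)
    refine h3.congr_deriv ?_
    field_simp
    ring
  have hanti : AntitoneOn ψ (Set.Icc a 1) := by
    apply antitoneOn_of_deriv_nonpos (convex_Icc a 1)
    · intro x hx
      exact ((hd x (lt_of_lt_of_le ha0 hx.1)).continuousAt).continuousWithinAt
    · intro x hx
      rw [interior_Icc] at hx
      exact ((hd x (ha0.trans hx.1)).differentiableAt).differentiableWithinAt
    · intro x hx
      rw [interior_Icc] at hx
      have hx0 : 0 < x := ha0.trans hx.1
      rw [(hd x hx0).deriv]
      have : 0 ≤ (x - 1) ^ 2 / x := by positivity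
      linarith
  have h1 : ψ 1 ≤ ψ a := hanti (Set.mem_Icc.mpr ⟨le_refl a, ha1.le⟩)
    (Set.mem_Icc.mpr ⟨ha1.le, le_refl 1⟩) ha1.le
  have h2 : ψ 1 = 0 := by simp [hψ]
  simp only [hψ] at h2 h1
  nlinarith

private lemma aux_key' {a : ℝ} (ha0 : 0 < a) (ha1 : a < 1) {t : ℝ} (ht1 : a ≤ t) (ht2 : t ≤ a⁻¹) :
    t - 1 - Real.log t ≤ ((-Real.log a + a - 1) / (a - 1) ^ 2) * (t - 1) ^ 2 := by
  have hne : a - 1 ≠ 0 := by linarith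
  have hsq : (0:ℝ) < (a - 1) ^ 2 := by positivity
  set M : ℝ := (-Real.log a + a - 1) / (a - 1) ^ 2 with hMdef
  have hM2 : (1:ℝ)/2 ≤ M := aux_half' ha0 ha1
  have hM0 : 0 < M := by linarith
  have hMa : M * (a - 1) ^ 2 = -Real.log a + a - 1 := div_mul_cancel₀ _ (by positivity)
  set φ : ℝ → ℝ := fun x => M * (x - 1) ^ 2 - (x - 1) + Real.log x with hφdef
  have hφa : φ a = 0 := by simp only [hφdef]; rw [hMa]; ring
  have hφ1 : φ 1 = 0 := by simp [hφdef]
  have ht0 : 0 < t := lt_of_lt_of_le ha0 ht1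
  have key : 0 ≤ φ t := by
    rcases le_or_gt 1 t with h1t | ht1'
    · -- monotone on [1, a⁻¹]
      have hmono : MonotoneOn φ (Set.Icc 1 a⁻¹) := by
        apply monotoneOn_of_deriv_nonneg (convex_Icc 1 a⁻¹)
        · intro x hx
          exact ((aux_deriv' M (lt_of_lt_of_le one_pos hx.1)).continuousAt).continuousWithinAt
        · intro x hx
          rw [interior_Icc] at hx
          exact ((aux_deriv' M (lt_trans one_pos hx.1)).differentiableAt).differentiableWithinAt
        · intro x hx
          rw [interior_Icc] at hx
          have hx1 : 1 < x := hx.1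
          have hx0 : 0 < x := lt_trans one_pos hx1
          rw [(aux_deriv' M hx0).deriv]
          have h2M : 1 ≤ 2 * M * x := by nlinarith
          have : 0 ≤ (x - 1) * (2 * M * x - 1) := by nlinarith
          positivity
      have h1mem : (1:ℝ) ∈ Set.Icc 1 a⁻¹ := ⟨le_refl 1, le_trans h1t ht2⟩
      have htmem : t ∈ Set.Icc 1 a⁻¹ := ⟨h1t, ht2⟩
      have := hmono h1mem htmem h1t
      rw [hφ1] at this; exact this
    · rcases le_or_gt (2 * M * t) 1 with hsub | hsub
      · have hmono : MonotoneOn φ (Set.Icc a t) := by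
          apply monotoneOn_of_deriv_nonneg (convex_Icc a t)
          · intro x hx
            exact ((aux_deriv' M (lt_of_lt_of_le ha0 hx.1)).continuousAt).continuousWithinAt
          · intro x hx
            rw [interior_Icc] at hx
            exact ((aux_deriv' M (lt_trans ha0 hx.1)).differentiableAt).differentiableWithinAt
          · intro x hx
            rw [interior_Icc] at hx
            have hx0 : 0 < x := lt_trans ha0 hx.1
            rw [(aux_deriv' M hx0).deriv]
            have hxlt : x < t := hx.2
            have h1 : x - 1 ≤ 0 := by linarith
            have h2 : 2 * M * x - 1 ≤ 0 := by nlinarith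
            have : 0 ≤ (x - 1) * (2 * M * x - 1) := by nlinarith
            positivity
        have := hmono ⟨le_refl a, ht1⟩ ⟨ht1, le_refl t⟩ ht1
        rw [hφa] at this; exact this
      · have hanti : AntitoneOn φ (Set.Icc t 1) := by
          apply antitoneOn_of_deriv_nonpos (convex_Icc t 1)
          · intro x hx
            exact ((aux_deriv' M (lt_of_lt_of_le ht0 hx.1)).continuousAt).continuousWithinAt
          · intro x hx
            rw [interior_Icc] at hx
            exact ((aux_deriv' M (lt_trans ht0 hx.1)).differentiableAt).differentiableWithinAt
          · intro x hx
            rw [interior_Icc] at hx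
            have hx0 : 0 < x := lt_trans ht0 hx.1
            rw [(aux_deriv' M hx0).deriv]
            have h1 : x - 1 ≤ 0 := by linarith [hx.2]
            have h2 : 0 ≤ 2 * M * x - 1 := by nlinarith [hx.1]
            have hnum : (x - 1) * (2 * M * x - 1) ≤ 0 := mul_nonpos_of_nonpos_of_nonneg h1 h2
            exact div_nonpos_of_nonpos_of_nonneg hnum hx0.le
        have := hanti ⟨le_refl t, ht1'.le⟩ ⟨ht1'.le, le_refl 1⟩ ht1'.le
        rw [hφ1] at this; exact this
  simp only [hφdef] at key
  linarith

private lemma eig_ge' {k : ℕ} {Z : Matrix (Fin k) (Fin k) ℝ} (hZ : Z.IsHermitian) {r : ℝ}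
    (h : (Z - r • 1).PosSemidef) (i : Fin k) : r ≤ hZ.eigenvalues i := by
  set v : Fin k → ℝ := ⇑(hZ.eigenvectorBasis i) with hv
  have hZv : Z *ᵥ v = hZ.eigenvalues i • v := hZ.mulVec_eigenvectorBasis i
  have hvv : dotProduct (star v) v = 1 := by
    have h1 : (inner ℝ (hZ.eigenvectorBasis i) (hZ.eigenvectorBasis i) : ℝ) = 1 := by
      rw [@inner_self_eq_norm_sq_to_K ℝ, hZ.eigenvectorBasis.orthonormal.1 i]
      norm_num
    rw [EuclideanSpace.inner_eq_star_dotProduct] at h1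
    exact h1
  have h2 := h.dotProduct_mulVec_nonneg v
  rw [sub_mulVec, dotProduct_sub, hZv, smul_mulVec, one_mulVec,
    dotProduct_smul, dotProduct_smul, hvv] at h2
  simp only [smul_eq_mul, mul_one] at h2
  linarith

private lemma eig_le' {k : ℕ} {Z : Matrix (Fin k) (Fin k) ℝ} (hZ : Z.IsHermitian) {r : ℝ}
    (h : (r • 1 - Z).PosSemidef) (i : Fin k) : hZ.eigenvalues i ≤ r := by
  set v : Fin k → ℝ := ⇑(hZ.eigenvectorBasis i) with hv
  have hZv : Z *ᵥ v = hZ.eigenvalues i • v := hZ.mulVec_eigenvectorBasis i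
  have hvv : dotProduct (star v) v = 1 := by
    have h1 : (inner ℝ (hZ.eigenvectorBasis i) (hZ.eigenvectorBasis i) : ℝ) = 1 := by
      rw [@inner_self_eq_norm_sq_to_K ℝ, hZ.eigenvectorBasis.orthonormal.1 i]
      norm_num
    rw [EuclideanSpace.inner_eq_star_dotProduct] at h1
    exact h1
  have h2 := h.dotProduct_mulVec_nonneg v
  rw [sub_mulVec, dotProduct_sub, hZv, smul_mulVec, one_mulVec,
    dotProduct_smul, dotProduct_smul, hvv] at h2
  simp only [smul_eq_mul, mul_one] at h2
  linarith

private lemma trace_eig' {k : ℕ} {Z : Matrix (Fin k) (Fin k) ℝ} (hZ : Z.IsHermitian) :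
    Z.trace = ∑ i, hZ.eigenvalues i := by
  have hU : star (hZ.eigenvectorUnitary : Matrix (Fin k) (Fin k) ℝ) *
      (hZ.eigenvectorUnitary : Matrix (Fin k) (Fin k) ℝ) = 1 :=
    mem_unitaryGroup_iff'.mp hZ.eigenvectorUnitary.2
  conv_lhs => rw [hZ.spectral_theorem, Unitary.conjStarAlgAut_apply]
  rw [trace_mul_cycle, hU, one_mul, trace_diagonal]
  simp

private lemma trace_sq_eig' {k : ℕ} {Z : Matrix (Fin k) (Fin k) ℝ} (hZ : Z.IsHermitian) :
    ((Z - 1) ^ 2).trace = ∑ i, (hZ.eigenvalues i - 1) ^ 2 := by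
  set U : Matrix (Fin k) (Fin k) ℝ := (hZ.eigenvectorUnitary : Matrix (Fin k) (Fin k) ℝ) with hUdef
  have hU : star U * U = 1 := mem_unitaryGroup_iff'.mp hZ.eigenvectorUnitary.2
  have hU' : U * star U = 1 := mem_unitaryGroup_iff.mp hZ.eigenvectorUnitary.2
  set D : Matrix (Fin k) (Fin k) ℝ :=
    diagonal (fun i => hZ.eigenvalues i - 1) with hDdef
  have hZ1 : Z - 1 = U * D * star U := by
    conv_lhs => rw [hZ.spectral_theorem, Unitary.conjStarAlgAut_apply]
    rw [hDdef]
    have : diagonal (fun i => hZ.eigenvalues i - 1) =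
        diagonal (RCLike.ofReal ∘ hZ.eigenvalues) - (1 : Matrix (Fin k) (Fin k) ℝ) := by
      rw [← diagonal_one, diagonal_sub]
      congr
    rw [this, Matrix.mul_sub, Matrix.sub_mul, Matrix.mul_one, hU']
  have hsq : (Z - 1) ^ 2 = U * (D * D) * star U := by
    rw [pow_two, hZ1]
    simp only [Matrix.mul_assoc]
    rw [← Matrix.mul_assoc (star U) U, hU, Matrix.one_mul]
  rw [hsq, trace_mul_cycle, hU, one_mul, diagonal_mul_diagonal, trace_diagonal]
  simp [pow_two]

private lemma psd_smul' {k : ℕ} {A : Matrix (Fin k) (Fin k) ℝ} (hA : A.PosSemidef) {r : ℝ}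
    (hr : 0 ≤ r) : (r • A).PosSemidef := by
  refine PosSemidef.of_dotProduct_mulVec_nonneg ?_ ?_
  · show (r • A)ᴴ = r • A
    rw [conjTranspose_smul, hA.1.eq]
    simp
  · intro x
    rw [smul_mulVec, dotProduct_smul]
    exact mul_nonneg hr (hA.dotProduct_mulVec_nonneg x)

/-- Second-order smoothness of the regularized covariance objective. -/
theorem stmt5 (k : ℕ) (hk : 0 < k) (γ τ : ℝ) (hγ0 : 0 < γ) (hγ1 : γ < 1) (hτ : 0 < τ)
    (G : Matrix (Fin k) (Fin k) ℝ) (hG : G.IsHermitian)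
    (a : ℝ) (ha0 : 0 < a) (ha1 : a < 1) :
    (∀ X Y : Matrix (Fin k) (Fin k) ℝ, X.PosDef → Y.PosDef →
      loewner (a • (1 : Matrix (Fin k) (Fin k) ℝ)) X →
      loewner X (1 : Matrix (Fin k) (Fin k) ℝ) →
      loewner (a • (1 : Matrix (Fin k) (Fin k) ℝ)) Y →
      loewner Y (1 : Matrix (Fin k) (Fin k) ℝ) →
      0 ≤ fG k γ τ G X - fG k γ τ G Y +
          Matrix.trace (((τ / (2 * (1 - γ))) • X⁻¹ - (1 / (1 - γ)) • G) * (Y - X)) ∧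
      fG k γ τ G X - fG k γ τ G Y +
          Matrix.trace (((τ / (2 * (1 - γ))) • X⁻¹ - (1 / (1 - γ)) • G) * (Y - X)) ≤
        (τ * (-Real.log a + a - 1) / (2 * (1 - γ) * (a - 1) ^ 2)) *
          Matrix.trace ((X⁻¹ * Y - 1) ^ 2)) ∧
    τ / (4 * (1 - γ)) ≤ τ * (-Real.log a + a - 1) / (2 * (1 - γ) * (a - 1) ^ 2) := by
  have h1γ : (0:ℝ) < 1 - γ := by linarith
  have hane : a - 1 ≠ 0 := by linarith
  set c : ℝ := τ / (2 * (1 - γ)) with hc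
  have hc0 : 0 < c := by positivity
  set M : ℝ := (-Real.log a + a - 1) / (a - 1) ^ 2 with hM
  have hM2 : (1:ℝ)/2 ≤ M := aux_half' ha0 ha1
  have hMtot : τ * (-Real.log a + a - 1) / (2 * (1 - γ) * (a - 1) ^ 2) = c * M := by
    rw [hc, hM]
    field_simp
  constructor
  · intro X Y hX hY hXa hX1 hYa hY1
    unfold loewner at hXa hX1 hYa hY1
    have hXdet : 0 < X.det := hX.det_pos
    have hYdet : 0 < Y.det := hY.det_pos
    have hXunit : IsUnit X.det := isUnit_iff_ne_zero.mpr hXdet.ne'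
    have hXinv : X⁻¹.PosDef := hX.inv
    have hsqrt : ∃ S : Matrix (Fin k) (Fin k) ℝ, S.PosSemidef ∧ S * S = X⁻¹ := by
      open scoped MatrixOrder in
      exact ⟨CFC.sqrt X⁻¹, (CFC.sqrt_nonneg _).posSemidef,
        CFC.sqrt_mul_sqrt_self _ hXinv.posSemidef.nonneg⟩
    set S : Matrix (Fin k) (Fin k) ℝ := hsqrt.choose with hSdef
    have hSpsd : S.PosSemidef := hsqrt.choose_spec.1
    have hSH : Sᴴ = S := hSpsd.1
    have hSS : S * S = X⁻¹ := hsqrt.choose_spec.2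
    have hXidet : 0 < X⁻¹.det := hXinv.det_pos
    have hSdet : IsUnit S.det := by
      have hd : S.det * S.det = X⁻¹.det := by rw [← det_mul, hSS]
      apply isUnit_iff_ne_zero.mpr
      intro h0
      rw [h0, mul_zero] at hd
      linarith
    have hSinv : S * S⁻¹ = 1 := mul_nonsing_inv S hSdet
    have hSinv' : S⁻¹ * S = 1 := nonsing_inv_mul S hSdet
    have hXX : X * X⁻¹ = 1 := mul_nonsing_inv X hXunit
    have hXX' : X⁻¹ * X = 1 := nonsing_inv_mul X hXunit
    have hSXS : S * X * S = 1 := by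
      have h1 : (S * X * S) * S = S := by
        rw [Matrix.mul_assoc (S * X) S S, hSS, Matrix.mul_assoc S X X⁻¹, hXX, Matrix.mul_one]
      calc S * X * S = (S * X * S) * (S * S⁻¹) := by rw [hSinv, Matrix.mul_one]
        _ = ((S * X * S) * S) * S⁻¹ := by rw [← Matrix.mul_assoc]
        _ = S * S⁻¹ := by rw [h1]
        _ = 1 := hSinv
    clear hSdef
    clear_value S
    set Z : Matrix (Fin k) (Fin k) ℝ := S * Y * S with hZdef
    have hZH : Z.IsHermitian := by
      show Zᴴ = Z
      rw [hZdef, conjTranspose_mul, conjTranspose_mul, hSH, hY.1.eq, Matrix.mul_assoc]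
    have hYaX : (Y - a • X).PosSemidef := by
      have h2 : ((a • ((1 : Matrix (Fin k) (Fin k) ℝ) - X))).PosSemidef := psd_smul' hX1 ha0.le
      have h3 := hYa.add h2
      have he : (Y - a • (1 : Matrix (Fin k) (Fin k) ℝ)) + a • ((1 : Matrix (Fin k) (Fin k) ℝ) - X)
          = Y - a • X := by
        rw [smul_sub]; abel
      rwa [he] at h3
    have hZa : (Z - a • 1).PosSemidef := by
      have h3 : (S * (Y - a • X) * Sᴴ).PosSemidef := hYaX.mul_mul_conjTranspose_same S
      rw [hSH] at h3
      have he : S * (Y - a • X) * S = Z - a • 1 := by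
        rw [Matrix.mul_sub, Matrix.sub_mul, Matrix.mul_smul, Matrix.smul_mul, hSXS, hZdef]
      rwa [he] at h3
    have haXY : (a⁻¹ • X - Y).PosSemidef := by
      have h1 : ((a⁻¹ • (X - a • (1 : Matrix (Fin k) (Fin k) ℝ)))).PosSemidef :=
        psd_smul' hXa (by positivity)
      have h3 := h1.add hY1
      have he : a⁻¹ • (X - a • (1 : Matrix (Fin k) (Fin k) ℝ)) +
          ((1 : Matrix (Fin k) (Fin k) ℝ) - Y) = a⁻¹ • X - Y := by
        rw [smul_sub, smul_smul, inv_mul_cancel₀ ha0.ne', one_smul]; abel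
      rwa [he] at h3
    have hZb : (a⁻¹ • 1 - Z).PosSemidef := by
      have h3 : (S * (a⁻¹ • X - Y) * Sᴴ).PosSemidef := haXY.mul_mul_conjTranspose_same S
      rw [hSH] at h3
      have he : S * (a⁻¹ • X - Y) * S = a⁻¹ • 1 - Z := by
        rw [Matrix.mul_sub, Matrix.sub_mul, Matrix.mul_smul, Matrix.smul_mul, hSXS, hZdef]
      rwa [he] at h3
    set lam : Fin k → ℝ := hZH.eigenvalues with hlam
    have hla : ∀ i, a ≤ lam i := fun i => eig_ge' hZH hZa i
    have hlb : ∀ i, lam i ≤ a⁻¹ := fun i => eig_le' hZH hZb i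
    have hlpos : ∀ i, 0 < lam i := fun i => lt_of_lt_of_le ha0 (hla i)
    have htr1 : (X⁻¹ * Y).trace = Z.trace := by
      rw [← hSS, hZdef]
      exact (Matrix.trace_mul_cycle S Y S).symm
    have hdetZ : Z.det = X⁻¹.det * Y.det := by
      rw [hZdef, det_mul, det_mul, ← hSS, det_mul]; ring
    have hlogdet : Real.log Z.det = Real.log Y.det - Real.log X.det := by
      rw [hdetZ, det_nonsing_inv, Ring.inverse_eq_inv',
        Real.log_mul (inv_ne_zero hXdet.ne') hYdet.ne', Real.log_inv]
      ring
    have htr2 : ((X⁻¹ * Y - 1) ^ 2).trace = ((Z - 1) ^ 2).trace := by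
      have he : X⁻¹ * Y - 1 = S * (Z - 1) * S⁻¹ := by
        rw [Matrix.mul_sub, Matrix.sub_mul, Matrix.mul_one, hSinv]
        congr 1
        rw [hZdef, ← hSS]
        symm
        calc S * (S * Y * S) * S⁻¹ = S * S * Y * (S * S⁻¹) := by
              simp only [Matrix.mul_assoc]
          _ = S * S * Y := by rw [hSinv, Matrix.mul_one]
      rw [he]
      have hsq : (S * (Z - 1) * S⁻¹) ^ 2 = S * ((Z - 1) * (Z - 1)) * S⁻¹ := by
        rw [pow_two]
        simp only [Matrix.mul_assoc]
        rw [← Matrix.mul_assoc S⁻¹ S, hSinv', Matrix.one_mul]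
      rw [hsq, pow_two, Matrix.trace_mul_cycle S ((Z - 1) * (Z - 1)) S⁻¹, ← Matrix.mul_assoc,
        hSinv', Matrix.one_mul]
    have hE : fG k γ τ G X - fG k γ τ G Y +
        Matrix.trace ((c • X⁻¹ - (1 / (1 - γ)) • G) * (Y - X)) =
        c * (Z.trace - (k : ℝ) - Real.log Z.det) := by
      unfold fG
      rw [Matrix.sub_mul, Matrix.trace_sub, Matrix.smul_mul, Matrix.smul_mul, Matrix.trace_smul,
        Matrix.trace_smul, Matrix.mul_sub, Matrix.trace_sub, hXX', Matrix.trace_one,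
        Matrix.mul_sub G, Matrix.trace_sub, htr1, hlogdet,
        Matrix.trace_mul_comm X G, Matrix.trace_mul_comm Y G]
      simp only [smul_eq_mul, Fintype.card_fin]
      ring
    have hsum : Z.trace - (k : ℝ) - Real.log Z.det =
        ∑ i, (lam i - 1 - Real.log (lam i)) := by
      have hdet : Z.det = ∏ i, lam i := by
        have := hZH.det_eq_prod_eigenvalues
        simpa using this
      rw [trace_eig' hZH, hdet, Real.log_prod (fun i _ => (hlpos i).ne'),
        Finset.sum_sub_distrib, Finset.sum_sub_distrib]
      simp [Finset.card_univ, hlam]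
    rw [hE, hsum]
    constructor
    · apply mul_nonneg hc0.le
      apply Finset.sum_nonneg
      intro i _
      have := Real.log_le_sub_one_of_pos (hlpos i)
      linarith
    · rw [hMtot, htr2, trace_sq_eig' hZH]
      calc c * ∑ i, (lam i - 1 - Real.log (lam i))
          ≤ c * ∑ i, M * (lam i - 1) ^ 2 := by
            apply mul_le_mul_of_nonneg_left _ hc0.le
            exact Finset.sum_le_sum fun i _ => aux_key' ha0 ha1 (hla i) (hlb i)
        _ = c * M * ∑ i, (lam i - 1) ^ 2 := by
            rw [← Finset.mul_sum, mul_assoc]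
  · have he : τ / (4 * (1 - γ)) = c * (1 / 2) := by
      rw [hc]; field_simp; ring
    rw [hMtot, he]
    exact mul_le_mul_of_nonneg_left hM2 hc0.le
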